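/- Let N ≥ 4 be even and a, b > 0. Let L′ be the weighted cycle Laplacian with edge weights w₁ = −a, w_i = a for odd i ≥ 3, and w_i = b for even i. Then L′ has exactly one positive eigenvalue, counted with multiplicity (in particular, the synchronous state in which exactly one phase difference exceeds π/2 (mod 2π) is a type-1 saddle). -/

import Mathlib

open Real Matrix

/-- The weighted cycle Laplacian on `N` nodes (indices mod `N`): the symmetric matrix
with `L i (i+1) = L (i+1) i = w i`, `L i i = −(w (i−1) + w i)` and all other entries `0`. -/
def cycleLaplacian (N : ℕ) [NeZero N] (w : Fin N → ℝ) : Matrix (Fin N) (Fin N) ℝ :=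
  Matrix.of fun i j =>
    if i = j then -(w (i - 1) + w i)
    else if j = i + 1 then w i
    else if i = j + 1 then w j
    else 0

namespace CycleLapAux

open Polynomial

lemma charpoly_conj_aux {n : Type*} [Fintype n] [DecidableEq n]
    (P Q B : Matrix n n ℝ) (h1 : P * Q = 1) (h2 : Q * P = 1) :
    (P * B * Q).charpoly = B.charpoly := by
  have hc : ∀ M : Matrix n n ℝ[X], Commute (Matrix.scalar n (X : ℝ[X])) M :=
    fun M => Matrix.scalar_commute _ (fun r' => Commute.all _ _) M
  have hmap : charmatrix (P * B * Q) =
      (C : ℝ →+* ℝ[X]).mapMatrix P * charmatrix B * (C : ℝ →+* ℝ[X]).mapMatrix Q := by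
    rw [charmatrix, charmatrix, mul_sub, sub_mul]
    congr 1
    · rw [mul_assoc, (hc _).eq, ← mul_assoc, ← _root_.map_mul, h1, _root_.map_one, one_mul]
    · rw [← _root_.map_mul, ← _root_.map_mul]
  have hdet : (P * B * Q).charpoly = ((C : ℝ →+* ℝ[X]).mapMatrix P).det * B.charpoly
      * ((C : ℝ →+* ℝ[X]).mapMatrix Q).det := by
    rw [Matrix.charpoly, hmap, det_mul, det_mul, Matrix.charpoly]
  rw [hdet, mul_comm, ← mul_assoc, ← det_mul, ← _root_.map_mul, h2, _root_.map_one,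
    det_one, one_mul]

lemma charpoly_eq_prod_eigenvalues {n : Type*} [Fintype n] [DecidableEq n] [LinearOrder n]
    (A : Matrix n n ℝ) (hA : A.IsHermitian) :
    A.charpoly = ∏ i, (X - C (hA.eigenvalues i)) := by
  have hsp := hA.spectral_theorem
  have hd : (RCLike.ofReal ∘ hA.eigenvalues : n → ℝ) = hA.eigenvalues := by
    funext i; simp [RCLike.ofReal_real_eq_id]
  rw [hd] at hsp
  rw [Unitary.conjStarAlgAut_apply] at hsp
  have hU1 : (hA.eigenvectorUnitary : Matrix n n ℝ) *
      star (hA.eigenvectorUnitary : Matrix n n ℝ) = 1 :=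
    Unitary.mul_star_self_of_mem hA.eigenvectorUnitary.2
  have hU2 : star (hA.eigenvectorUnitary : Matrix n n ℝ) *
      (hA.eigenvectorUnitary : Matrix n n ℝ) = 1 :=
    Unitary.star_mul_self_of_mem hA.eigenvectorUnitary.2
  calc A.charpoly
      = ((hA.eigenvectorUnitary : Matrix n n ℝ) * diagonal hA.eigenvalues
          * star (hA.eigenvectorUnitary : Matrix n n ℝ)).charpoly := congrArg _ hsp
    _ = (diagonal hA.eigenvalues).charpoly := charpoly_conj_aux _ _ _ hU1 hU2
    _ = ∏ i, (X - C (hA.eigenvalues i)) := by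
        rw [Matrix.charpoly_of_upperTriangular _ (Matrix.blockTriangular_diagonal _)]
        simp

lemma cycle_quadform (N : ℕ) [NeZero N] (hN : 3 ≤ N) (w : Fin N → ℝ) (x : Fin N → ℝ) :
    x ⬝ᵥ (cycleLaplacian N w *ᵥ x) = -∑ i, w i * (x i - x (i + 1))^2 := by
  have h10 : (1 : Fin N) ≠ 0 := by
    intro h'
    have h2 : (1 : Fin N).val = 0 := by rw [h']; exact Fin.val_zero _
    rw [Fin.val_one', Nat.mod_eq_of_lt (by omega)] at h2
    omega
  have h20 : (1 : Fin N) + 1 ≠ 0 := by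
    intro h'
    have h2 : ((1 : Fin N) + 1).val = 0 := by rw [h']; exact Fin.val_zero _
    have e1 : 1 % N = 1 := Nat.mod_eq_of_lt (by omega)
    rw [Fin.val_add, Fin.val_one', e1, Nat.mod_eq_of_lt (by omega)] at h2
    omega
  have hmv : ∀ i, (cycleLaplacian N w *ᵥ x) i
      = -(w (i - 1) + w i) * x i + (w i * x (i + 1) + w (i - 1) * x (i - 1)) := by
    intro i
    have hii1 : i ≠ i + 1 := fun h => h10 (left_eq_add.mp h)
    have hii1' : i ≠ i - 1 := by
      intro h
      exact h10 (add_eq_left.mp (eq_sub_iff_add_eq.mp h))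
    have h11' : i + 1 ≠ i - 1 := by
      intro h
      apply h20
      have h3 := eq_sub_iff_add_eq.mp h
      rw [add_assoc] at h3
      exact add_eq_left.mp h3
    have hstep : ∑ j ∈ ({i, i + 1, i - 1} : Finset (Fin N)), cycleLaplacian N w i j * x j
        = ∑ j, cycleLaplacian N w i j * x j := by
      apply Finset.sum_subset (Finset.subset_univ _)
      intro j _ hj
      simp only [Finset.mem_insert, Finset.mem_singleton, not_or] at hj
      obtain ⟨hj1, hj2, hj3⟩ := hj
      have c1 : i ≠ j := Ne.symm hj1
      have c3 : i ≠ j + 1 := by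
        intro h
        exact hj3 (eq_sub_iff_add_eq.mpr h.symm)
      rw [cycleLaplacian, Matrix.of_apply, if_neg c1, if_neg hj2, if_neg c3, zero_mul]
    have hmem1 : i ∉ ({i + 1, i - 1} : Finset (Fin N)) := by
      simp only [Finset.mem_insert, Finset.mem_singleton]
      push_neg
      exact ⟨hii1, hii1'⟩
    have hmem2 : i + 1 ∉ ({i - 1} : Finset (Fin N)) := by
      simpa using h11'
    have e1 : cycleLaplacian N w i i = -(w (i - 1) + w i) := by
      rw [cycleLaplacian, Matrix.of_apply, if_pos rfl]
    have e2 : cycleLaplacian N w i (i + 1) = w i := by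
      rw [cycleLaplacian, Matrix.of_apply, if_neg hii1, if_pos rfl]
    have e3 : cycleLaplacian N w i (i - 1) = w (i - 1) := by
      rw [cycleLaplacian, Matrix.of_apply, if_neg hii1', if_neg (Ne.symm h11'),
        if_pos (sub_add_cancel i 1).symm]
    rw [Matrix.mulVec, dotProduct, ← hstep]
    rw [Finset.sum_insert hmem1]
    rw [Finset.sum_insert hmem2]
    rw [Finset.sum_singleton, e1, e2, e3]
  calc x ⬝ᵥ (cycleLaplacian N w *ᵥ x)
      = ∑ i, ((-(w i) * x i * x i + w i * x i * x (i + 1))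
          + (-(w (i - 1)) * x i * x i + w (i - 1) * x i * x (i - 1))) := by
        refine Finset.sum_congr rfl fun i _ => ?_
        rw [hmv i]; ring
    _ = ∑ i, (-(w i) * x i * x i + w i * x i * x (i + 1))
          + ∑ i, (-(w (i - 1)) * x i * x i + w (i - 1) * x i * x (i - 1)) := by
        rw [Finset.sum_add_distrib]
    _ = ∑ i, (-(w i) * x i * x i + w i * x i * x (i + 1))
          + ∑ i, (-(w i) * x (i + 1) * x (i + 1) + w i * x (i + 1) * x i) := by
        congr 1
        refine (Fintype.sum_equiv (Equiv.addRight (1 : Fin N)) _ _ fun i => ?_).symm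
        simp [add_sub_cancel_right]
    _ = ∑ i, (-(w i * (x i - x (i + 1))^2)) := by
        rw [← Finset.sum_add_distrib]
        refine Finset.sum_congr rfl fun i _ => ?_
        ring
    _ = -∑ i, w i * (x i - x (i + 1))^2 := by
        simp

lemma cycle_isHermitian (N : ℕ) [NeZero N] (hN : 3 ≤ N) (w : Fin N → ℝ) :
    (cycleLaplacian N w).IsHermitian := by
  have h20 : (1 : Fin N) + 1 ≠ 0 := by
    intro h'
    have h2 : ((1 : Fin N) + 1).val = 0 := by rw [h']; exact Fin.val_zero _
    have e1 : 1 % N = 1 := Nat.mod_eq_of_lt (by omega)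
    rw [Fin.val_add, Fin.val_one', e1, Nat.mod_eq_of_lt (by omega)] at h2
    omega
  rw [Matrix.IsHermitian]
  ext i j
  rw [Matrix.conjTranspose_apply, star_trivial]
  rcases eq_or_ne i j with h | h
  · subst h; rfl
  · have hnot : ¬(j = i + 1 ∧ i = j + 1) := by
      rintro ⟨h1, h2⟩
      rw [h1, add_assoc] at h2
      exact h20 (add_eq_left.mp h2.symm)
    by_cases h1 : j = i + 1 <;> by_cases h2 : i = j + 1
    · exact absurd ⟨h1, h2⟩ hnot
    · have eji : cycleLaplacian N w j i = w i := by
        rw [cycleLaplacian, Matrix.of_apply, if_neg (Ne.symm h), if_neg h2, if_pos h1]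
      have eij : cycleLaplacian N w i j = w i := by
        rw [cycleLaplacian, Matrix.of_apply, if_neg h, if_pos h1]
      rw [eji, eij]
    · have eji : cycleLaplacian N w j i = w j := by
        rw [cycleLaplacian, Matrix.of_apply, if_neg (Ne.symm h), if_pos h2]
      have eij : cycleLaplacian N w i j = w j := by
        rw [cycleLaplacian, Matrix.of_apply, if_neg h, if_neg h1, if_pos h2]
      rw [eji, eij]
    · have eji : cycleLaplacian N w j i = 0 := by
        rw [cycleLaplacian, Matrix.of_apply, if_neg (Ne.symm h), if_neg h2, if_neg h1]
      have eij : cycleLaplacian N w i j = 0 := by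
        rw [cycleLaplacian, Matrix.of_apply, if_neg h, if_neg h1, if_neg h2]
      rw [eji, eij]

end CycleLapAux

/-- Let `N ≥ 4` be even and `a, b > 0`. The weighted cycle Laplacian `L′`
with edge weights `w₁ = −a`, `wᵢ = a` for odd `i ≥ 3`, `wᵢ = b` for even `i`
(in `Fin N`, index `k` stands for edge `k+1`) has exactly one positive eigenvalue,
counted with multiplicity (i.e. exactly one positive root of its characteristic
polynomial, with multiplicity): one flipped phase difference gives a type-1 saddle. -/
theorem cycleLaplacian_one_flipped_edge_one_positive_eigenvalue
    (N : ℕ) [NeZero N] (hN : 4 ≤ N) (hNeven : Even N)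
    (a b : ℝ) (ha : 0 < a) (hb : 0 < b) :
    ((cycleLaplacian N fun k =>
        if (k : ℕ) = 0 then -a
        else if (k : ℕ) % 2 = 0 then a
        else b).charpoly.roots.filter (fun x => 0 < x)).card = 1 := by
  classical
  set W : Fin N → ℝ := (fun k =>
        if (k : ℕ) = 0 then -a
        else if (k : ℕ) % 2 = 0 then a
        else b) with hWdef
  have hN3 : 3 ≤ N := by omega
  have hA : (cycleLaplacian N W).IsHermitian := CycleLapAux.cycle_isHermitian N hN3 W
  -- anchors
  let k0 : Fin N := ⟨0, by omega⟩
  let k1 : Fin N := ⟨1, by omega⟩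
  let k2 : Fin N := ⟨2, by omega⟩
  have e1N : 1 % N = 1 := Nat.mod_eq_of_lt (by omega)
  have hk01 : k0 + 1 = k1 := by
    apply Fin.ext
    rw [Fin.val_add, Fin.val_one', e1N]
    show (0 + 1) % N = 1
    rw [Nat.mod_eq_of_lt (by omega)]
  have hk12 : k1 + 1 = k2 := by
    apply Fin.ext
    rw [Fin.val_add, Fin.val_one', e1N]
    show (1 + 1) % N = 2
    rw [Nat.mod_eq_of_lt (by omega)]
  have hW0 : W k0 = -a := by simp [hWdef, k0]
  have hW1 : W k1 = b := by simp [hWdef, k1]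
  have hW2 : W k2 = a := by simp [hWdef, k2]
  have hWpos : ∀ k : Fin N, k ≠ k0 → 0 < W k := by
    intro k hk
    have hv : (k : ℕ) ≠ 0 := fun h => hk (Fin.ext h)
    rw [hWdef]
    simp only [if_neg hv]
    by_cases h2 : (k : ℕ) % 2 = 0
    · rw [if_pos h2]; exact ha
    · rw [if_neg h2]; exact hb
  have hquad := CycleLapAux.cycle_quadform N hN3 W
  -- Q ≤ 0 on vectors with equal values at k0, k1
  have hQnonpos : ∀ y : Fin N → ℝ, y k0 = y k1 →
      y ⬝ᵥ (cycleLaplacian N W *ᵥ y) ≤ 0 := by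
    intro y hy
    rw [hquad y, neg_nonpos]
    apply Finset.sum_nonneg
    intro k _
    by_cases hk : k = k0
    · subst hk
      rw [hk01, hy, sub_self]
      simp
    · exact mul_nonneg (hWpos k hk).le (sq_nonneg _)
  -- test vector with positive quadratic form
  have hab : (0:ℝ) < a + b := by linarith
  set ε : ℝ := a / (a + b) with hε
  have hε0 : 0 < ε := div_pos ha hab
  set x₀ : Fin N → ℝ := (fun k => if (k : ℕ) = 1 then 1 else if (k : ℕ) = 2 then 1 - ε else 0)
    with hx₀def
  have hQx₀ : 0 < x₀ ⬝ᵥ (cycleLaplacian N W *ᵥ x₀) := by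
    rw [hquad x₀]
    have hsub : ∑ k, W k * (x₀ k - x₀ (k + 1))^2
        = ∑ k ∈ ({k0, k1, k2} : Finset (Fin N)), W k * (x₀ k - x₀ (k + 1))^2 := by
      symm
      apply Finset.sum_subset (Finset.subset_univ _)
      intro k _ hk
      simp only [Finset.mem_insert, Finset.mem_singleton, not_or] at hk
      obtain ⟨h0, h1v, h2v⟩ := hk
      have v1 : (k : ℕ) ≠ 1 := fun h => h1v (Fin.ext h)
      have v2 : (k : ℕ) ≠ 2 := fun h => h2v (Fin.ext h)
      have w1 : ((k + 1 : Fin N) : ℕ) ≠ 1 := by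
        intro h
        have : (k + 1 : Fin N) = k1 := Fin.ext h
        rw [← hk01] at this
        exact h0 (add_right_cancel this)
      have w2 : ((k + 1 : Fin N) : ℕ) ≠ 2 := by
        intro h
        have : (k + 1 : Fin N) = k2 := Fin.ext h
        rw [← hk12] at this
        exact h1v (add_right_cancel this)
      have hx1 : x₀ k = 0 := by rw [hx₀def]; simp only [if_neg v1, if_neg v2]
      have hx2 : x₀ (k + 1) = 0 := by rw [hx₀def]; simp only [if_neg w1, if_neg w2]
      rw [hx1, hx2, sub_self]
      simp
    have hd01 : k0 ≠ k1 := by simp [k0, k1, Fin.ext_iff]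
    have hd02 : k0 ≠ k2 := by simp [k0, k2, Fin.ext_iff]
    have hd12 : k1 ≠ k2 := by simp [k1, k2, Fin.ext_iff]
    have hmem1 : k0 ∉ ({k1, k2} : Finset (Fin N)) := by simp [hd01, hd02]
    have hmem2 : k1 ∉ ({k2} : Finset (Fin N)) := by simp [hd12]
    rw [hsub, Finset.sum_insert hmem1, Finset.sum_insert hmem2, Finset.sum_singleton]
    have hx0 : x₀ k0 = 0 := by rw [hx₀def]; norm_num [k0]
    have hx1 : x₀ k1 = 1 := by rw [hx₀def]; norm_num [k1]
    have hx2 : x₀ k2 = 1 - ε := by rw [hx₀def]; norm_num [k2]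
    have hx3 : x₀ (k2 + 1) = 0 := by
      have hv : ((k2 + 1 : Fin N) : ℕ) = 3 := by
        rw [Fin.val_add, Fin.val_one', e1N]
        show (2 + 1) % N = 3
        rw [Nat.mod_eq_of_lt (by omega)]
      rw [hx₀def]
      simp only [hv]
      norm_num
    rw [hk01, hk12, hW0, hW1, hW2, hx0, hx1, hx2, hx3]
    have key : b * ε^2 + a * (1 - ε)^2 = a - a * ε := by
      rw [hε]
      field_simp
      ring
    nlinarith [key, mul_pos ha hε0]
  -- existence of a positive eigenvalue
  have hex : ∃ i, 0 < hA.eigenvalues i := by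
    by_contra hno
    push_neg at hno
    have hsp := hA.spectral_theorem
    have hd : (RCLike.ofReal ∘ hA.eigenvalues : Fin N → ℝ) = hA.eigenvalues := by
      funext i; simp [RCLike.ofReal_real_eq_id]
    rw [hd] at hsp
    rw [Unitary.conjStarAlgAut_apply] at hsp
    have hdiag : (Matrix.diagonal (fun i => -hA.eigenvalues i)).PosSemidef :=
      Matrix.posSemidef_diagonal_iff.mpr fun i => neg_nonneg.mpr (hno i)
    have hpsd := hdiag.mul_mul_conjTranspose_same
      (hA.eigenvectorUnitary : Matrix (Fin N) (Fin N) ℝ)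
    have hneg : (hA.eigenvectorUnitary : Matrix (Fin N) (Fin N) ℝ)
        * Matrix.diagonal (fun i => -hA.eigenvalues i)
        * (hA.eigenvectorUnitary : Matrix (Fin N) (Fin N) ℝ)ᴴ
        = -(cycleLaplacian N W) := by
      have hdn : Matrix.diagonal (fun i => -hA.eigenvalues i)
          = -Matrix.diagonal hA.eigenvalues := by
        ext i' j'
        by_cases hij' : i' = j'
        · subst hij'; simp
        · simp [Matrix.diagonal_apply_ne _ hij']
      rw [hdn, Matrix.mul_neg, Matrix.neg_mul, ← Matrix.star_eq_conjTranspose, ← hsp]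
    rw [hneg] at hpsd
    have h2 := hpsd.dotProduct_mulVec_nonneg x₀
    rw [Matrix.neg_mulVec, dotProduct_neg] at h2
    rw [star_trivial] at h2

    linarith
  obtain ⟨i₀, hi₀⟩ := hex
  -- uniqueness of the positive eigenvalue
  have huniq : ∀ i j : Fin N, 0 < hA.eigenvalues i → 0 < hA.eigenvalues j → i = j := by
    intro i j hli hlj
    by_contra hij
    have hu : cycleLaplacian N W *ᵥ ⇑(hA.eigenvectorBasis i)
        = hA.eigenvalues i • ⇑(hA.eigenvectorBasis i) := hA.mulVec_eigenvectorBasis i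
    have hv : cycleLaplacian N W *ᵥ ⇑(hA.eigenvectorBasis j)
        = hA.eigenvalues j • ⇑(hA.eigenvectorBasis j) := hA.mulVec_eigenvectorBasis j
    set u : Fin N → ℝ := ⇑(hA.eigenvectorBasis i) with hudef
    set v : Fin N → ℝ := ⇑(hA.eigenvectorBasis j) with hvdef
    have horth := hA.eigenvectorBasis.orthonormal
    have hinner := orthonormal_iff_ite.mp horth
    have huv : u ⬝ᵥ v = 0 := by
      have h := hinner i j
      rw [if_neg hij] at h
      simpa [PiLp.inner_apply, RCLike.inner_apply, dotProduct, mul_comm] using h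
    have hvu : v ⬝ᵥ u = 0 := by
      have h := hinner j i
      rw [if_neg (Ne.symm hij)] at h
      simpa [PiLp.inner_apply, RCLike.inner_apply, dotProduct, mul_comm] using h
    have huu : u ⬝ᵥ u = 1 := by
      have h := hinner i i
      rw [if_pos rfl] at h
      rw [← h]
      simp only [PiLp.inner_apply, RCLike.inner_apply, dotProduct]
      rfl
    have hvv : v ⬝ᵥ v = 1 := by
      have h := hinner j j
      rw [if_pos rfl] at h
      rw [← h]
      simp only [PiLp.inner_apply, RCLike.inner_apply, dotProduct]
      rfl
    have key : ∀ c d : ℝ, (c ≠ 0 ∨ d ≠ 0) →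
        c * (u k0 - u k1) + d * (v k0 - v k1) = 0 → False := by
      intro c d hcd hlin
      set y : Fin N → ℝ := fun k => c * u k + d * v k with hydef
      have hy01 : y k0 = y k1 := by
        rw [hydef]
        simp only
        nlinarith [hlin]
      have hyvec : y = c • u + d • v := by
        funext k
        simp [hydef]
      have hQy : y ⬝ᵥ (cycleLaplacian N W *ᵥ y)
          = hA.eigenvalues i * c^2 + hA.eigenvalues j * d^2 := by
        rw [hyvec, Matrix.mulVec_add, Matrix.mulVec_smul, Matrix.mulVec_smul, hu, hv]
        simp only [dotProduct_add, add_dotProduct, dotProduct_smul, smul_dotProduct,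
          smul_eq_mul, smul_smul, huu, hvv, huv, hvu]
        ring
      have hpos : 0 < hA.eigenvalues i * c^2 + hA.eigenvalues j * d^2 := by
        rcases hcd with hc | hd
        · have h1 : 0 < hA.eigenvalues i * c^2 :=
            mul_pos hli (by positivity)
          have h2 : 0 ≤ hA.eigenvalues j * d^2 := mul_nonneg hlj.le (sq_nonneg d)
          linarith
        · have h1 : 0 < hA.eigenvalues j * d^2 :=
            mul_pos hlj (by positivity)
          have h2 : 0 ≤ hA.eigenvalues i * c^2 := mul_nonneg hli.le (sq_nonneg c)
          linarith
      have hle := hQnonpos y hy01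
      rw [hQy] at hle
      linarith
    by_cases hdu : u k0 - u k1 = 0
    · exact key 1 0 (Or.inl one_ne_zero) (by rw [hdu]; ring)
    · exact key (v k0 - v k1) (-(u k0 - u k1)) (Or.inr (neg_ne_zero.mpr hdu)) (by ring)
  -- assemble the count
  have hcp := CycleLapAux.charpoly_eq_prod_eigenvalues _ hA
  have hroots : (cycleLaplacian N W).charpoly.roots
      = Multiset.map hA.eigenvalues Finset.univ.val := by
    rw [hcp]
    have h1 : (∏ i, (Polynomial.X - Polynomial.C (hA.eigenvalues i)))
        = ((Finset.univ.val.map hA.eigenvalues).map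
            (fun r => Polynomial.X - Polynomial.C r)).prod := by
      rw [Multiset.map_map]
      rfl
    rw [h1, Polynomial.roots_multiset_prod_X_sub_C]
  rw [hroots]
  have hcard : (Multiset.filter (fun x => 0 < x)
        (Multiset.map hA.eigenvalues Finset.univ.val)).card
      = (Finset.univ.filter (fun i => 0 < hA.eigenvalues i)).card := by
    rw [← Multiset.countP_eq_card_filter, Multiset.countP_map]
    rfl
  rw [hcard, Finset.card_eq_one]
  refine ⟨i₀, ?_⟩
  ext j
  simp only [Finset.mem_filter, Finset.mem_univ, true_and, Finset.mem_singleton]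
  constructor
  · intro hj
    exact huniq j i₀ hj hi₀
  · intro hj
    subst hj
    exact hi₀
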